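/- Let u : [0,1] → ℝ be continuously differentiable with u > 0, and suppose u'(x) ≥ ε (x - d₁) u(x)^p for all x ∈ [d₁, d₂], where 0 ≤ d₁ < d₂ ≤ 1, ε > 0, p > 1. Then u(d₁) ≤ (2 / (ε (p-1) (d₂ - d₁)²))^{1/(p-1)}. -/

import Mathlib

/-- If `u` is positive and `C¹` on `[0,1]` with derivative `u'`, and
`u'(x) ≥ ε (x - d₁) u(x)^p` on `[d₁, d₂] ⊆ [0,1]` with `ε > 0`, `p > 1`, then
`u(d₁) ≤ (2/(ε (p-1) (d₂-d₁)²))^{1/(p-1)}`. -/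
theorem blowup_point_bound (u u' : ℝ → ℝ) (d₁ d₂ ε p : ℝ)
    (hd₁ : 0 ≤ d₁) (hd : d₁ < d₂) (hd₂ : d₂ ≤ 1) (hε : 0 < ε) (hp : 1 < p)
    (hderiv : ∀ x ∈ Set.Icc (0 : ℝ) 1, HasDerivAt u (u' x) x)
    (hcont : ContinuousOn u' (Set.Icc (0 : ℝ) 1))
    (hpos : ∀ x ∈ Set.Icc (0 : ℝ) 1, 0 < u x)
    (hineq : ∀ x ∈ Set.Icc d₁ d₂, ε * (x - d₁) * u x ^ p ≤ u' x) :
    u d₁ ≤ (2 / (ε * (p - 1) * (d₂ - d₁) ^ 2)) ^ (1 / (p - 1)) := by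
  have hsub : Set.Icc d₁ d₂ ⊆ Set.Icc (0 : ℝ) 1 := Set.Icc_subset_Icc hd₁ hd₂
  have hp1 : (0:ℝ) < p - 1 := by linarith
  set G : ℝ → ℝ := fun x => u x ^ (1 - p) + ε * (p - 1) / 2 * (x - d₁) ^ 2 with hGdef
  set G' : ℝ → ℝ := fun x => u' x * (1 - p) * u x ^ (-p) + ε * (p - 1) * (x - d₁) with hG'def
  have hGderiv : ∀ x ∈ Set.Icc d₁ d₂, HasDerivAt G (G' x) x := by
    intro x hx
    have hu := hderiv x (hsub hx)
    have hux : u x ≠ 0 := (hpos x (hsub hx)).ne'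
    have h1 : HasDerivAt (fun y => u y ^ (1 - p)) (u' x * (1 - p) * u x ^ (1 - p - 1)) x :=
      hu.rpow_const (Or.inl hux)
    have h2 : HasDerivAt (fun y => ε * (p - 1) / 2 * (y - d₁) ^ 2)
        (ε * (p - 1) / 2 * (2 * (x - d₁))) x := by
      have h3 := (((hasDerivAt_id x).sub_const d₁).pow 2).const_mul (ε * (p - 1) / 2)
      convert h3 using 1
      · rfl
      · rfl
      · rfl
      simp [id]
    have := h1.add h2
    convert this using 1
    · rfl
    · rfl
    · rfl
    have he : (1:ℝ) - p - 1 = -p := by ring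
    rw [he]
    simp only [hG'def]
    ring
  have hG'le : ∀ x ∈ Set.Icc d₁ d₂, G' x ≤ 0 := by
    intro x hx
    have hux : 0 < u x := hpos x (hsub hx)
    have hineqx := hineq x hx
    have hupos : (0:ℝ) < u x ^ (-p) := Real.rpow_pos_of_pos hux _
    have hcancel : u x ^ p * u x ^ (-p) = 1 := by
      rw [← Real.rpow_add hux]; simp
    have hmul : u' x * ((1 - p) * u x ^ (-p)) ≤
        ε * (x - d₁) * u x ^ p * ((1 - p) * u x ^ (-p)) := by
      apply mul_le_mul_of_nonpos_right hineqx
      apply mul_nonpos_of_nonpos_of_nonneg (by linarith) hupos.le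
    have hrw : ε * (x - d₁) * u x ^ p * ((1 - p) * u x ^ (-p)) =
        ε * (x - d₁) * (1 - p) * (u x ^ p * u x ^ (-p)) := by ring
    rw [hrw, hcancel, mul_one] at hmul
    simp only [hG'def]
    nlinarith [hmul]
  have hanti : AntitoneOn G (Set.Icc d₁ d₂) := by
    apply antitoneOn_of_deriv_nonpos (convex_Icc d₁ d₂)
    · exact fun x hx => (hGderiv x hx).continuousAt.continuousWithinAt
    · intro x hx
      rw [interior_Icc] at hx
      exact (hGderiv x (Set.mem_Icc_of_Ioo hx)).differentiableAt.differentiableWithinAt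
    · intro x hx
      rw [interior_Icc] at hx
      rw [(hGderiv x (Set.mem_Icc_of_Ioo hx)).deriv]
      exact hG'le x (Set.mem_Icc_of_Ioo hx)
  have hGle : G d₂ ≤ G d₁ :=
    hanti (Set.left_mem_Icc.mpr hd.le) (Set.right_mem_Icc.mpr hd.le) hd.le
  have hB : 0 < u d₁ := hpos d₁ (hsub (Set.left_mem_Icc.mpr hd.le))
  have hB2 : 0 < u d₂ := hpos d₂ (hsub (Set.right_mem_Icc.mpr hd.le))
  have hud2 : 0 < u d₂ ^ (1 - p) := Real.rpow_pos_of_pos hB2 _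
  set A : ℝ := ε * (p - 1) * (d₂ - d₁) ^ 2 with hAdef
  have hA : 0 < A := by
    apply mul_pos (mul_pos hε hp1)
    have : 0 < d₂ - d₁ := by linarith
    positivity
  have hkey : A / 2 ≤ u d₁ ^ (1 - p) := by
    simp only [hGdef, hAdef] at hGle ⊢
    nlinarith [hGle, hud2]
  have hBp : 0 < u d₁ ^ (p - 1) := Real.rpow_pos_of_pos hB _
  have hinv : u d₁ ^ (1 - p) = (u d₁ ^ (p - 1))⁻¹ := by
    rw [← Real.rpow_neg hB.le]; ring_nf
  rw [hinv] at hkey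
  have hmul1 : u d₁ ^ (p - 1) * (u d₁ ^ (p - 1))⁻¹ = 1 := mul_inv_cancel₀ hBp.ne'
  have h2A : u d₁ ^ (p - 1) ≤ 2 / A := by
    rw [le_div_iff₀ hA]
    nlinarith [mul_le_mul_of_nonneg_left hkey hBp.le]
  have hfin := Real.rpow_le_rpow hBp.le h2A (by positivity : (0:ℝ) ≤ 1 / (p - 1))
  rwa [← Real.rpow_mul hB.le, mul_one_div, div_self hp1.ne', Real.rpow_one] at hfin
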